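/- Last-stop rule of the optimal refuelling strategy (Lemma 1): let x be an optimal plan with x (n−1) > 0 and c (n−1) > 0. Then the vehicle reaches the goal with an empty tank: f n = 0. (Otherwise, reducing the purchase at the last stop by min(x (n−1), f n) > 0 would yield a feasible plan of strictly smaller cost.) -/

import Mathlib

/-- Fuel level recursion on ℕ: level 0 is the initial fuel `q0`, and the level after
stop `i` is the previous level plus the refuel amount `x i` minus the consumption `d i`. -/
noncomputable def fuelNat (q0 : ℝ) (d x : ℕ → ℝ) : ℕ → ℝ
  | 0 => q0
  | i + 1 => fuelNat q0 d x i + x i - d i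

/-- Fuel levels `f : Fin (n+1) → ℝ` of a plan `x : Fin n → ℝ` with consumptions `d`,
initial fuel `q0`: `f 0 = q0` and `f (i+1) = f i + x i - d i`. -/
noncomputable def fuel {n : ℕ} (q0 : ℝ) (d x : Fin n → ℝ) (i : Fin (n + 1)) : ℝ :=
  fuelNat q0 (fun j => if h : j < n then d ⟨j, h⟩ else 0)
    (fun j => if h : j < n then x ⟨j, h⟩ else 0) i

/-- A plan `x` is feasible (for tank capacity `Q` and initial fuel `q0`) if for every stop `i`:
`x i ≥ 0`, `f i + x i ≤ Q`, and `f (i+1) ≥ 0`. -/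
def Feasible {n : ℕ} (Q q0 : ℝ) (d x : Fin n → ℝ) : Prop :=
  ∀ i : Fin n, 0 ≤ x i ∧ fuel q0 d x i.castSucc + x i ≤ Q ∧ 0 ≤ fuel q0 d x i.succ

/-- Cost of a plan: `Σ_i (c i) * (x i)`. -/
noncomputable def cost {n : ℕ} (c x : Fin n → ℝ) : ℝ := ∑ i, c i * x i

lemma fuelNat_congr (q0 : ℝ) (d x x' : ℕ → ℝ) :
    ∀ i, (∀ j, j < i → x j = x' j) → fuelNat q0 d x i = fuelNat q0 d x' i
  | 0, _ => rfl
  | i + 1, h => by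
      simp only [fuelNat, fuelNat_congr q0 d x x' i (fun j hj => h j (by omega)),
        h i (by omega)]

/-- Lemma 1, last-stop rule: at an optimal plan, if the last stop `n-1` is a
refuelling stop and its price is positive, the vehicle reaches the goal with an empty
tank: `f n = 0`. -/
theorem optimal_empty_tank_at_goal_of_refuel_last {n : ℕ} (hn : 0 < n) (Q q0 : ℝ)
    (hQ : 0 < Q) (hq0 : 0 ≤ q0 ∧ q0 ≤ Q) (d c : Fin n → ℝ)
    (hd : ∀ i, 0 ≤ d i ∧ d i ≤ Q) (hc : ∀ i, 0 ≤ c i)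
    (x : Fin n → ℝ) (hfeas : Feasible Q q0 d x)
    (hopt : ∀ y : Fin n → ℝ, Feasible Q q0 d y → cost c x ≤ cost c y)
    (hlast : 0 < x ⟨n - 1, by omega⟩) (hclast : 0 < c ⟨n - 1, by omega⟩) :
    fuel q0 d x (Fin.last n) = 0 := by
  obtain ⟨m, rfl⟩ : ∃ m, n = m + 1 := ⟨n - 1, by omega⟩
  set last : Fin (m + 1) := ⟨m, by omega⟩ with hlastdef
  by_contra hne
  have hsucc : (last).succ = Fin.last (m + 1) := rfl
  have hF0 : 0 ≤ fuel q0 d x (Fin.last (m + 1)) := by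
    have := (hfeas last).2.2
    rwa [hsucc] at this
  have hpos : 0 < fuel q0 d x (Fin.last (m + 1)) := lt_of_le_of_ne hF0 (Ne.symm hne)
  have hxlast : 0 < x last := hlast
  set F := fuel q0 d x (Fin.last (m + 1)) with hFdef
  set ε := min (x last) F with hεdef
  have hε0 : 0 < ε := lt_min hxlast hpos
  set y := Function.update x last (x last - ε) with hydef
  -- fuel levels agree at indices ≤ m
  have hfuel_eq : ∀ i : Fin (m + 2), (i : ℕ) ≤ m → fuel q0 d y i = fuel q0 d x i := by
    intro i hi
    apply fuelNat_congr
    intro j hj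
    have hjm : j < m := by omega
    have hjn : j < m + 1 := by omega
    simp only [hjn, dif_pos]
    rw [hydef, Function.update_of_ne]
    exact Fin.ne_of_val_ne (by simp only [hlastdef]; omega)
  -- fuel at the goal for y
  have hfuel_last : fuel q0 d y (Fin.last (m + 1)) = F - ε := by
    have h1 : fuel q0 d y (Fin.last (m + 1)) =
        fuel q0 d y (last.castSucc) + y last - d last := by
      show fuelNat _ _ _ (m + 1) = _
      rw [fuelNat]
      simp [fuel, Nat.lt_succ_self]
      rfl
    have h2 : F = fuel q0 d x (last.castSucc) + x last - d last := by
      show fuelNat _ _ _ (m + 1) = _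
      rw [fuelNat]
      simp [fuel, Nat.lt_succ_self]
      rfl
    have h3 : fuel q0 d y (last.castSucc) = fuel q0 d x (last.castSucc) :=
      hfuel_eq _ (by simp [last])
    have h4 : y last = x last - ε := by simp [hydef]
    rw [h1, h3, h4, h2]; ring
  have hεle : ε ≤ x last := min_le_left _ _
  have hεleF : ε ≤ F := min_le_right _ _
  have hfeasy : Feasible Q q0 d y := by
    intro i
    by_cases hi : i = last
    · subst hi
      refine ⟨?_, ?_, ?_⟩
      · simp [hydef]; linarith
      · have := (hfeas last).2.1
        rw [hfuel_eq _ (by simp [last])]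
        have h4 : y last = x last - ε := by simp [hydef]
        rw [h4]; linarith
      · rw [hsucc, hfuel_last]; linarith
    · have hne' : (i : ℕ) ≠ m := fun h => hi (Fin.ext h)
      have him : (i : ℕ) < m := by omega
      refine ⟨?_, ?_, ?_⟩
      · rw [hydef, Function.update_of_ne hi]; exact (hfeas i).1
      · rw [hydef, Function.update_of_ne hi, hfuel_eq _ (by simp; omega)]
        exact (hfeas i).2.1
      · rw [hfuel_eq _ (by simp [Fin.val_succ]; omega)]
        exact (hfeas i).2.2
  have hcost : cost c x - cost c y = c last * ε := by
    unfold cost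
    rw [← Finset.sum_sub_distrib, Finset.sum_eq_single last]
    · simp [hydef]; ring
    · intro b _ hb
      rw [hydef, Function.update_of_ne hb]; ring
    · simp
  have hle := hopt y hfeasy
  have h0 : c last * ε ≤ 0 := by linarith
  have hclast' : 0 < c last := hclast
  nlinarith [mul_pos hclast' hε0]
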